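/- Let p, y, z ∈ ℝ^{n+1}, α > 0 with L := |y - p| ≥ α and |z - y| ≤ α/6, and let ν be a unit vector with ⟨(z-p)/|z-p|, ν⟩ ≥ α/|z-p|. Then, setting ω = (y-p)/|y-p|, we have ⟨ω, ν⟩ ≥ α/(2L). -/

import Mathlib

theorem inner_omega_nu_bound (n : ℕ) (p y z : EuclideanSpace ℝ (Fin (n+1)))
    (α L : ℝ) (hα : 0 < α) (hL : L = ‖y - p‖) (hLα : α ≤ L) (hzy : ‖z - y‖ ≤ α / 6)
    (ν : EuclideanSpace ℝ (Fin (n+1))) (hν : ‖ν‖ = 1)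
    (hinner : α / ‖z - p‖ ≤ (inner ℝ ((‖z - p‖)⁻¹ • (z - p)) ν : ℝ)) :
    α / (2 * L) ≤ (inner ℝ ((‖y - p‖)⁻¹ • (y - p)) ν : ℝ) := by
  have hLpos : 0 < L := lt_of_lt_of_le hα hLα
  have hyz : ‖y - z‖ ≤ α / 6 := by rwa [norm_sub_rev]
  have hr : (5 : ℝ) / 6 * α ≤ ‖z - p‖ := by
    have h1 : ‖y - p‖ - ‖y - z‖ ≤ ‖(y - p) - (y - z)‖ := norm_sub_norm_le _ _
    have h2 : (y - p) - (y - z) = z - p := by abel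
    rw [h2] at h1
    rw [← hL] at h1
    linarith
  have hrpos : 0 < ‖z - p‖ := by nlinarith
  have hI : α ≤ (inner ℝ (z - p) ν : ℝ) := by
    rw [real_inner_smul_left] at hinner
    have h := mul_le_mul_of_nonneg_right hinner hrpos.le
    rw [div_mul_cancel₀ _ hrpos.ne', inv_mul_eq_div, div_mul_cancel₀ _ hrpos.ne'] at h
    exact h
  have hsplit : (inner ℝ (y - p) ν : ℝ) = (inner ℝ (z - p) ν : ℝ) + (inner ℝ (y - z) ν : ℝ) := by
    rw [← inner_add_left]
    congr 1
    abel
  have hlow : -(α / 6) ≤ (inner ℝ (y - z) ν : ℝ) := by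
    have h1 : |(inner ℝ (y - z) ν : ℝ)| ≤ ‖y - z‖ * ‖ν‖ := abs_real_inner_le_norm _ _
    rw [hν, mul_one] at h1
    have := neg_abs_le (inner ℝ (y - z) ν : ℝ)
    linarith
  have hJ : α / 2 ≤ (inner ℝ (y - p) ν : ℝ) := by rw [hsplit]; linarith
  rw [real_inner_smul_left, ← hL]
  rw [div_le_iff₀ (by positivity)]
  have : L⁻¹ * (inner ℝ (y - p) ν : ℝ) * (2 * L) = 2 * (inner ℝ (y - p) ν : ℝ) := by
    field_simp
  rw [this]
  linarith
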